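/- Let G be a 4-connected finite simple graph with minimum degree δ, let S be a minimum cut-set of G, let H₁ be a component of G∖S, and set V₁ = V(H₁) ∪ S. Let C be a longest cycle in G which is a D₃-cycle, and let x₁x₂ be an edge of G∖C with x₁, x₂ ∈ V(H₁). If Y = R ∪ R⁺ ∪ M⁺² ⊆ V₁, where R = N_C(x₁) ∪ N_C(x₂) and M = N_C(x₁) ∩ N_C(x₂), then |V(C) ∩ V₁| ≥ 3δ − 3. -/

import Mathlib

namespace SimpleGraph

variable {V : Type*}

/-- `S` is a cut-set of `G`: deleting `S` disconnects the graph. -/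
def IsCutSet [Fintype V] (G : SimpleGraph V) (S : Finset V) : Prop :=
  ¬ (G.induce ((↑S : Set V)ᶜ)).Connected

/-- The vertex connectivity of `G`: the largest `k` such that `G` is `k`-connected,
i.e. `G` has more than `k` vertices and removing fewer than `k` vertices
always leaves a connected graph. -/
noncomputable def vertexConnectivity [Fintype V] (G : SimpleGraph V) : ℕ :=
  sSup {k | k < Fintype.card V ∧
    ∀ S : Finset V, S.card < k → (G.induce ((↑S : Set V)ᶜ)).Connected}

/-- `S` is a minimum cut-set of `G`: a cut-set whose cardinality equals
the connectivity of `G`. -/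
def IsMinCutSet [Fintype V] (G : SimpleGraph V) (S : Finset V) : Prop :=
  G.IsCutSet S ∧ S.card = G.vertexConnectivity

/-- The circumference of `G`: the length of a longest cycle (`0` if there is none). -/
noncomputable def circumference (G : SimpleGraph V) : ℕ :=
  sSup {n | ∃ (v : V) (C : G.Walk v v), C.IsCycle ∧ C.length = n}

/-- `C` is a longest cycle in `G`. -/
def IsLongestCycle {G : SimpleGraph V} {v : V} (C : G.Walk v v) : Prop :=
  C.IsCycle ∧ ∀ (w : V) (D : G.Walk w w), D.IsCycle → D.length ≤ C.length

/-- `C` is a dominating cycle: every edge of `G` has an endpoint on `C`. -/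
def IsDominatingCycle {G : SimpleGraph V} {v : V} (C : G.Walk v v) : Prop :=
  C.IsCycle ∧ ∀ a b : V, G.Adj a b → a ∈ C.support ∨ b ∈ C.support

/-- `C` is a `D₃`-cycle: every path of length at least 2 in `G` has a vertex
in common with `C`. -/
def IsD3Cycle {G : SimpleGraph V} {v : V} (C : G.Walk v v) : Prop :=
  C.IsCycle ∧ ∀ (a b : V) (P : G.Walk a b), P.IsPath → 2 ≤ P.length →
    ∃ z, z ∈ P.support ∧ z ∈ C.support

/-- The successor of a vertex `x` on the (oriented) cycle `C`
(and `x` itself if `x` does not lie on `C`). -/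
noncomputable def cycleSucc [DecidableEq V] {G : SimpleGraph V} {v : V}
    (C : G.Walk v v) (x : V) : V :=
  if h : x ∈ C.support.tail then C.support.tail.next x h else x

/-- The neighborhood of `x` on the cycle `C`, as a finset: `N(x) ∩ V(C)`. -/
def cycleNbhd [Fintype V] [DecidableEq V] {G : SimpleGraph V} [DecidableRel G.Adj]
    {v : V} (C : G.Walk v v) (x : V) : Finset V :=
  G.neighborFinset x ∩ C.support.toFinset

end SimpleGraph

/-! ### Auxiliary list lemmas -/

namespace List

lemma next_congr' {α : Type*} [DecidableEq α] {l l' : List α} (h : l = l') {x : α}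
    (hx : x ∈ l) : l.next x hx = l'.next x (h ▸ hx) := by subst h; rfl

lemma prev_congr' {α : Type*} [DecidableEq α] {l : List α} {a b : α} (h : a = b)
    (ha : a ∈ l) : l.prev a ha = l.prev b (h ▸ ha) := by subst h; rfl

lemma getLast_congr' {α : Type*} {l l' : List α} (h : l = l') (hl : l ≠ []) :
    l.getLast hl = l'.getLast (h ▸ hl) := by subst h; rfl

end List

namespace SimpleGraph

open Walk

variable {V : Type*} [DecidableEq V] {G : SimpleGraph V} {v : V}

lemma Walk.getLast_support' {u w : V} (p : G.Walk u w) (h : p.support ≠ []) :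
    p.support.getLast h = w := by
  induction p with
  | nil => rfl
  | cons ha p ih =>
    rw [List.getLast_congr' (Walk.support_cons ha p) h, List.getLast_cons p.support_ne_nil]
    exact ih _

lemma Walk.exists_cons_of_ne {u w : V} (D : G.Walk u w) (h : u ≠ w) :
    ∃ (z : V) (ha : G.Adj u z) (D₂ : G.Walk z w), D = Walk.cons ha D₂ := by
  cases D with
  | nil => exact absurd rfl h
  | cons ha D₂ => exact ⟨_, ha, D₂, rfl⟩

lemma Walk.ne_of_nodup_support {u w : V} (D : G.Walk u w) (h : ¬ D.Nil)
    (hnd : D.support.Nodup) : u ≠ w := by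
  cases D with
  | nil => simp at h
  | cons ha p =>
    rw [Walk.support_cons, List.nodup_cons] at hnd
    exact fun he => hnd.1 (he ▸ p.end_mem_support)

lemma mem_tail_of_mem_support {C : G.Walk v v} (hc : ¬ C.Nil) {x : V}
    (hx : x ∈ C.support) : x ∈ C.support.tail := by
  cases C with
  | nil => simp at hc
  | cons h p =>
    rw [Walk.support_cons] at hx
    simp only [Walk.support_cons, List.tail_cons]
    rcases List.mem_cons.mp hx with rfl | hx
    · exact p.end_mem_support
    · exact hx

lemma cycleSucc_eq_next {C : G.Walk v v} {x : V} (hx : x ∈ C.support.tail) :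
    cycleSucc C x = C.support.tail.next x hx := dif_pos hx

lemma cycleSucc_mem_support {C : G.Walk v v} (hc : C.IsCycle) {x : V}
    (hx : x ∈ C.support) : cycleSucc C x ∈ C.support := by
  have hx' := mem_tail_of_mem_support hc.not_nil hx
  rw [cycleSucc_eq_next hx']
  exact List.mem_of_mem_tail (List.next_mem _ _ _)

lemma cycleSucc_injOn {C : G.Walk v v} (hc : C.IsCycle) {x y : V}
    (hx : x ∈ C.support) (hy : y ∈ C.support)
    (h : cycleSucc C x = cycleSucc C y) : x = y := by
  have hx' := mem_tail_of_mem_support hc.not_nil hx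
  have hy' := mem_tail_of_mem_support hc.not_nil hy
  have hnd : C.support.tail.Nodup := hc.support_nodup
  rw [cycleSucc_eq_next hx', cycleSucc_eq_next hy'] at h
  calc x = C.support.tail.prev (C.support.tail.next x hx') (List.next_mem _ _ _) :=
        (List.prev_next _ hnd x hx').symm
    _ = C.support.tail.prev (C.support.tail.next y hy') (List.next_mem _ _ _) := by
        rw [List.prev_congr' h]
    _ = y := List.prev_next _ hnd y hy'

lemma exists_rotate_cons {C : G.Walk v v} (hc : C.IsCycle) {x : V} (hx : x ∈ C.support) :
    ∃ (h : G.Adj x (cycleSucc C x)) (D : G.Walk (cycleSucc C x) x),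
      C.rotate x hx = Walk.cons h D := by
  have hx' : x ∈ C.support.tail := mem_tail_of_mem_support hc.not_nil hx
  have hD0 : (C.rotate x hx).IsCycle := hc.rotate hx
  cases hE : C.rotate x hx with
  | nil => rw [hE] at hD0; exact absurd rfl hD0.ne_nil
  | @cons _ y _ hadj D =>
    have hDs : (C.rotate x hx).support.tail = D.support := by
      rw [hE, Walk.support_cons, List.tail_cons]
    have hndD : D.support.Nodup := hDs ▸ hD0.support_nodup
    have hxD : x ∈ D.support := D.end_mem_support
    have hxy : x ≠ y := fun h => G.loopless.irrefl y (h ▸ hadj)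
    have hrot' : D.support ~r C.support.tail := hDs ▸ (support_rotate C x hx)
    have hform : D.support = y :: D.support.tail := D.support_eq_cons
    have hxt : x ∈ D.support.tail := by
      rcases List.mem_cons.mp (hform ▸ hxD) with h | h
      · exact absurd h hxy
      · exact h
    have hgl : x = (y :: D.support.tail).getLast (List.cons_ne_nil _ _) := by
      rw [← List.getLast_congr' hform D.support_ne_nil]
      exact (Walk.getLast_support' D _).symm
    have hndt : D.support.tail.Nodup := (hform ▸ hndD).of_cons
    have hnx : D.support.next x hxD = y := by
      rw [List.next_congr' hform hxD]
      exact List.next_getLast_cons _ x hxt y _ hxy hgl hndt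
    have key : cycleSucc C x = y := by
      rw [cycleSucc_eq_next hx', ← List.isRotated_next_eq hrot' hndD hxD, hnx]
    subst key
    exact ⟨hadj, D, rfl⟩

lemma adj_cycleSucc {C : G.Walk v v} (hc : C.IsCycle) {x : V} (hx : x ∈ C.support) :
    G.Adj x (cycleSucc C x) := by
  obtain ⟨h, -, -⟩ := exists_rotate_cons hc hx
  exact h

lemma exists_rotate_cons_cons {C : G.Walk v v} (hc : C.IsCycle) {x : V}
    (hx : x ∈ C.support) :
    ∃ (h1 : G.Adj x (cycleSucc C x))
      (h2 : G.Adj (cycleSucc C x) (cycleSucc C (cycleSucc C x)))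
      (D : G.Walk (cycleSucc C (cycleSucc C x)) x),
      C.rotate x hx = Walk.cons h1 (Walk.cons h2 D) := by
  obtain ⟨h1, D1, hE⟩ := exists_rotate_cons hc hx
  have hy1C : cycleSucc C x ∈ C.support := cycleSucc_mem_support hc hx
  have hy1' : cycleSucc C x ∈ C.support.tail :=
    mem_tail_of_mem_support hc.not_nil hy1C
  obtain ⟨z, h2, D2, rfl⟩ := D1.exists_cons_of_ne (G.ne_of_adj h1).symm
  have hD0 : (C.rotate x hx).IsCycle := hc.rotate hx
  have hDs : (C.rotate x hx).support.tail = (Walk.cons h2 D2).support := by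
    rw [hE, Walk.support_cons, List.tail_cons]
  have hndD : (Walk.cons h2 D2).support.Nodup := hDs ▸ hD0.support_nodup
  have hrot' : (Walk.cons h2 D2).support ~r C.support.tail := hDs ▸ (support_rotate C x hx)
  have hy1mem : cycleSucc C x ∈ (Walk.cons h2 D2).support := Walk.start_mem_support _
  have hform : (Walk.cons h2 D2).support = cycleSucc C x :: z :: D2.support.tail := by
    rw [Walk.support_cons, D2.support_eq_cons]
    rfl
  have hnx : (Walk.cons h2 D2).support.next (cycleSucc C x) hy1mem = z := by
    rw [List.next_congr' hform hy1mem]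
    exact List.next_cons_cons_eq _ _ _ _
  have key : cycleSucc C (cycleSucc C x) = z := by
    rw [cycleSucc_eq_next hy1', ← List.isRotated_next_eq hrot' hndD hy1mem, hnx]
  subst key
  exact ⟨h1, h2, D2, hE⟩

lemma rotate_length_eq {C : G.Walk v v} {x : V} (hx : x ∈ C.support) :
    (C.rotate x hx).length = C.length := by
  rw [← Walk.length_darts, ← Walk.length_darts]
  exact (rotate_darts C x hx).perm.length_eq

/-- The generic surgery lemma: splicing a path `P` into a longest cycle cannot
produce a longer cycle. -/
lemma no_longer {C : G.Walk v v} (hlc : IsLongestCycle C) {x w : V}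
    (P : G.Walk x w) (D : G.Walk w x) (hP : P.IsPath)
    (hDsup : ∀ z ∈ D.support, z ∈ C.support)
    (hDsn : D.support.Nodup)
    (hDen : D.edges.Nodup)
    (hlen : C.length < P.length + D.length)
    (hmid : ∀ z ∈ P.support, z ≠ x → z ≠ w → z ∉ C.support)
    (hedge : ∀ e ∈ P.edges, ∃ z ∈ e, z ∉ C.support) : False := by
  have hWcyc : (P.append D).IsCycle := by
    rw [Walk.isCycle_def]
    refine ⟨?_, ?_, ?_⟩
    · rw [Walk.isTrail_def, Walk.edges_append, List.nodup_append]
      refine ⟨hP.isTrail.edges_nodup, hDen, ?_⟩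
      intro e heP e' heD heq
      subst heq
      obtain ⟨zz, hze, hzC⟩ := hedge e heP
      induction e with
      | h a b =>
        rcases Sym2.mem_iff.mp hze with rfl | rfl
        · exact hzC (hDsup _ (D.fst_mem_support_of_mem_edges heD))
        · exact hzC (hDsup _ (D.snd_mem_support_of_mem_edges heD))
    · intro hnil
      have h0 := congrArg Walk.length hnil
      rw [Walk.length_append] at h0
      simp only [Walk.length_nil] at h0
      omega
    · rw [Walk.tail_support_append, List.nodup_append]
      refine ⟨hP.support_nodup.tail, hDsn.tail, ?_⟩
      intro z hzP z' hzD heq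
      subst heq
      have hzPs : z ∈ P.support := List.mem_of_mem_tail hzP
      have hzx : z ≠ x := by
        intro h; subst h
        have := hP.support_nodup
        rw [P.support_eq_cons] at this
        exact (List.nodup_cons.mp this).1 hzP
      have hzw : z ≠ w := by
        intro h; subst h
        rw [D.support_eq_cons] at hDsn
        exact (List.nodup_cons.mp hDsn).1 hzD
      exact hmid z hzPs hzx hzw
        (hDsup z (List.mem_of_mem_tail hzD))
  have := hlc.2 x (P.append D) hWcyc
  rw [Walk.length_append] at this
  omega

/-- No vertex of a longest cycle has a path of length 2 through an off-cycle vertex to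
its successor. -/
lemma key_one' {C : G.Walk v v} (hlc : IsLongestCycle C) {x a : V}
    (hx : x ∈ C.support) (ha : a ∉ C.support)
    (h1 : G.Adj x a) (h2 : G.Adj a (cycleSucc C x)) : False := by
  obtain ⟨hadjy, D, hE⟩ := exists_rotate_cons hlc.1 hx
  have hD0 : (C.rotate x hx).IsCycle := hlc.1.rotate hx
  have hDs : (C.rotate x hx).support.tail = D.support := by
    rw [hE, Walk.support_cons, List.tail_cons]
  have hndD : D.support.Nodup := hDs ▸ hD0.support_nodup
  have hDsup : ∀ z ∈ D.support, z ∈ C.support := by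
    intro z hz
    exact List.mem_of_mem_tail
      (((support_rotate C x hx).mem_iff).mp (hDs ▸ hz : z ∈ (C.rotate x hx).support.tail))
  have hDen : D.edges.Nodup := by
    have := hD0.isCircuit.isTrail.edges_nodup
    rw [hE, Walk.edges_cons] at this
    exact this.of_cons
  have hlenD : D.length + 1 = C.length := by
    have h0 := congrArg Walk.length hE
    rw [rotate_length_eq hx] at h0
    rw [Walk.length_cons] at h0
    omega
  have hyC : cycleSucc C x ∈ C.support := cycleSucc_mem_support hlc.1 hx
  have hxa : x ≠ a := fun h => ha (h ▸ hx)
  have hay : a ≠ cycleSucc C x := fun h => ha (h ▸ hyC)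
  have hxy : x ≠ cycleSucc C x := G.ne_of_adj hadjy
  let P : G.Walk x (cycleSucc C x) := Walk.cons h1 (Walk.cons h2 Walk.nil)
  have hPp : P.IsPath := by
    rw [Walk.isPath_def]
    simp [P, hxa, hxy, hay]
  refine no_longer hlc P D hPp hDsup hndD hDen ?_ ?_ ?_
  · have : P.length = 2 := rfl
    omega
  · intro z hz hzx hzy
    simp only [P, Walk.support_cons, Walk.support_nil, List.mem_cons,
      List.not_mem_nil, or_false] at hz
    rcases hz with rfl | rfl | rfl
    · exact absurd rfl hzx
    · exact ha
    · exact absurd rfl hzy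
  · intro e he
    simp only [P, Walk.edges_cons, Walk.edges_nil, List.mem_cons,
      List.not_mem_nil, or_false] at he
    rcases he with rfl | rfl
    · exact ⟨a, by simp, ha⟩
    · exact ⟨a, by simp, ha⟩

/-- No vertex of a longest cycle has a path of length 3 through two off-cycle vertices to
its successor. -/
lemma key_one {C : G.Walk v v} (hlc : IsLongestCycle C) {x a b : V}
    (hx : x ∈ C.support) (ha : a ∉ C.support) (hb : b ∉ C.support) (hab : a ≠ b)
    (h1 : G.Adj x a) (h2 : G.Adj a b) (h3 : G.Adj b (cycleSucc C x)) : False := by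
  obtain ⟨hadjy, D, hE⟩ := exists_rotate_cons hlc.1 hx
  have hD0 : (C.rotate x hx).IsCycle := hlc.1.rotate hx
  have hDs : (C.rotate x hx).support.tail = D.support := by
    rw [hE, Walk.support_cons, List.tail_cons]
  have hndD : D.support.Nodup := hDs ▸ hD0.support_nodup
  have hDsup : ∀ z ∈ D.support, z ∈ C.support := by
    intro z hz
    exact List.mem_of_mem_tail
      (((support_rotate C x hx).mem_iff).mp (hDs ▸ hz : z ∈ (C.rotate x hx).support.tail))
  have hDen : D.edges.Nodup := by
    have := hD0.isCircuit.isTrail.edges_nodup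
    rw [hE, Walk.edges_cons] at this
    exact this.of_cons
  have hlenD : D.length + 1 = C.length := by
    have h0 := congrArg Walk.length hE
    rw [rotate_length_eq hx] at h0
    rw [Walk.length_cons] at h0
    omega
  have hyC : cycleSucc C x ∈ C.support := cycleSucc_mem_support hlc.1 hx
  have hxa : x ≠ a := fun h => ha (h ▸ hx)
  have hxb : x ≠ b := fun h => hb (h ▸ hx)
  have hay : a ≠ cycleSucc C x := fun h => ha (h ▸ hyC)
  have hby : b ≠ cycleSucc C x := fun h => hb (h ▸ hyC)
  have hxy : x ≠ cycleSucc C x := G.ne_of_adj hadjy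
  let P : G.Walk x (cycleSucc C x) := Walk.cons h1 (Walk.cons h2 (Walk.cons h3 Walk.nil))
  have hPp : P.IsPath := by
    rw [Walk.isPath_def]
    simp [P, hxa, hxb, hxy, hab, hay, hby]
  refine no_longer hlc P D hPp hDsup hndD hDen ?_ ?_ ?_
  · have : P.length = 3 := rfl
    omega
  · intro z hz hzx hzy
    simp only [P, Walk.support_cons, Walk.support_nil, List.mem_cons,
      List.not_mem_nil, or_false] at hz
    rcases hz with rfl | rfl | rfl | rfl
    · exact absurd rfl hzx
    · exact ha
    · exact hb
    · exact absurd rfl hzy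
  · intro e he
    simp only [P, Walk.edges_cons, Walk.edges_nil, List.mem_cons,
      List.not_mem_nil, or_false] at he
    rcases he with rfl | rfl | rfl
    · exact ⟨a, by simp, ha⟩
    · exact ⟨a, by simp, ha⟩
    · exact ⟨b, by simp, hb⟩

/-- No vertex of a longest cycle has a path of length 3 through two off-cycle vertices to
its second successor. -/
lemma key_two {C : G.Walk v v} (hlc : IsLongestCycle C) {x a b : V}
    (hx : x ∈ C.support) (ha : a ∉ C.support) (hb : b ∉ C.support) (hab : a ≠ b)
    (h1 : G.Adj x a) (h2 : G.Adj a b)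
    (h3 : G.Adj b (cycleSucc C (cycleSucc C x))) : False := by
  obtain ⟨hadj1, hadj2, D, hE⟩ := exists_rotate_cons_cons hlc.1 hx
  have hD0 : (C.rotate x hx).IsCycle := hlc.1.rotate hx
  have hDs : (C.rotate x hx).support.tail = cycleSucc C x :: D.support := by
    rw [hE, Walk.support_cons, Walk.support_cons, List.tail_cons]
  have hndD' : (cycleSucc C x :: D.support).Nodup := hDs ▸ hD0.support_nodup
  have hndD : D.support.Nodup := hndD'.of_cons
  have hDsup : ∀ z ∈ D.support, z ∈ C.support := by
    intro z hz
    refine List.mem_of_mem_tail (((support_rotate C x hx).mem_iff).mp ?_)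
    rw [hDs]
    exact List.mem_cons_of_mem _ hz
  have hDen : D.edges.Nodup := by
    have := hD0.isCircuit.isTrail.edges_nodup
    rw [hE, Walk.edges_cons, Walk.edges_cons] at this
    exact this.of_cons.of_cons
  have hlenD : D.length + 2 = C.length := by
    have h0 := congrArg Walk.length hE
    rw [rotate_length_eq hx] at h0
    rw [Walk.length_cons, Walk.length_cons] at h0
    omega
  have hyC : cycleSucc C x ∈ C.support := cycleSucc_mem_support hlc.1 hx
  have hy2C : cycleSucc C (cycleSucc C x) ∈ C.support := cycleSucc_mem_support hlc.1 hyC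
  have hxa : x ≠ a := fun h => ha (h ▸ hx)
  have hxb : x ≠ b := fun h => hb (h ▸ hx)
  have hay : a ≠ cycleSucc C (cycleSucc C x) := fun h => ha (h ▸ hy2C)
  have hby : b ≠ cycleSucc C (cycleSucc C x) := fun h => hb (h ▸ hy2C)
  have hxy2 : x ≠ cycleSucc C (cycleSucc C x) := by
    have h3len := hlc.1.three_le_length
    have hDnn : ¬ D.Nil := by
      rw [Walk.nil_iff_length_eq]
      omega
    exact (Walk.ne_of_nodup_support D hDnn hndD).symm
  let P : G.Walk x (cycleSucc C (cycleSucc C x)) :=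
    Walk.cons h1 (Walk.cons h2 (Walk.cons h3 Walk.nil))
  have hPp : P.IsPath := by
    rw [Walk.isPath_def]
    simp [P, hxa, hxb, hxy2, hab, hay, hby]
  refine no_longer hlc P D hPp hDsup hndD hDen ?_ ?_ ?_
  · have : P.length = 3 := rfl
    omega
  · intro z hz hzx hzy
    simp only [P, Walk.support_cons, Walk.support_nil, List.mem_cons,
      List.not_mem_nil, or_false] at hz
    rcases hz with rfl | rfl | rfl | rfl
    · exact absurd rfl hzx
    · exact ha
    · exact hb
    · exact absurd rfl hzy
  · intro e he
    simp only [P, Walk.edges_cons, Walk.edges_nil, List.mem_cons,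
      List.not_mem_nil, or_false] at he
    rcases he with rfl | rfl | rfl
    · exact ⟨a, by simp, ha⟩
    · exact ⟨a, by simp, ha⟩
    · exact ⟨b, by simp, hb⟩

end SimpleGraph

open SimpleGraph in
/-- If `Y ⊆ V₁ = V(H₁) ∪ S`, then `|V(C) ∩ V₁| ≥ 3δ - 3`. -/
theorem statement_9 {V : Type*} [Fintype V] [DecidableEq V]
    (G : SimpleGraph V) [DecidableRel G.Adj]
    (h4 : 4 ≤ G.vertexConnectivity)
    (S : Finset V) (hS : G.IsMinCutSet S)
    (H₁ : (G.induce ((↑S : Set V)ᶜ)).ConnectedComponent)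
    (V₁ : Set V) (hV₁ : V₁ = (Subtype.val '' H₁.supp) ∪ ↑S)
    {v : V} (C : G.Walk v v) (hC : IsLongestCycle C) (hD3 : IsD3Cycle C)
    (x₁ x₂ : V) (hadj : G.Adj x₁ x₂) (hx₁ : x₁ ∉ C.support) (hx₂ : x₂ ∉ C.support)
    (hx₁H : x₁ ∈ Subtype.val '' H₁.supp) (hx₂H : x₂ ∈ Subtype.val '' H₁.supp)
    (R M Y : Finset V)
    (hR : R = cycleNbhd C x₁ ∪ cycleNbhd C x₂)
    (hM : M = cycleNbhd C x₁ ∩ cycleNbhd C x₂)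
    (hY : Y = R ∪ R.image (cycleSucc C) ∪ M.image (cycleSucc C ∘ cycleSucc C))
    (hYV₁ : (↑Y : Set V) ⊆ V₁) :
    3 * G.minDegree ≤ ({z | z ∈ C.support} ∩ V₁).ncard + 3 := by
  classical
  have hCcyc : C.IsCycle := hC.1
  -- membership characterizations
  have hmemN : ∀ i u : V, u ∈ cycleNbhd C i ↔ G.Adj i u ∧ u ∈ C.support := by
    intro i u
    simp [cycleNbhd, and_comm]
  have hmemR : ∀ u : V, u ∈ R ↔ u ∈ C.support ∧ (G.Adj x₁ u ∨ G.Adj x₂ u) := by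
    intro u
    rw [hR]
    simp only [Finset.mem_union, hmemN]
    tauto
  have hmemM : ∀ u : V, u ∈ M ↔ u ∈ C.support ∧ G.Adj x₁ u ∧ G.Adj x₂ u := by
    intro u
    rw [hM]
    simp only [Finset.mem_inter, hmemN]
    tauto
  -- degree bounds
  have hdeg : ∀ i j : V, G.Adj i j → i ∉ C.support → j ∉ C.support →
      G.minDegree ≤ (cycleNbhd C i).card + 1 := by
    intro i j hij hiC hjC
    have hsub : G.neighborFinset i ⊆ insert j (cycleNbhd C i) := by
      intro y hy
      have hyi : G.Adj i y := (G.mem_neighborFinset i y).mp hy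
      by_cases hyj : y = j
      · simp [hyj]
      · by_cases hyC : y ∈ C.support
        · exact Finset.mem_insert_of_mem ((hmemN i y).mpr ⟨hyi, hyC⟩)
        · exfalso
          -- path y - i - j of length 2 misses C
          let P : G.Walk y j := Walk.cons hyi.symm (Walk.cons hij Walk.nil)
          have hPp : P.IsPath := by
            rw [Walk.isPath_def]
            have h1 : y ≠ i := (G.ne_of_adj hyi).symm
            have h2 : i ≠ j := G.ne_of_adj hij
            simp [P, h1, h2, hyj]
          obtain ⟨z, hzP, hzC⟩ := hD3.2 y j P hPp (by rfl)
          simp only [P, Walk.support_cons, Walk.support_nil, List.mem_cons,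
            List.not_mem_nil, or_false] at hzP
          rcases hzP with rfl | rfl | rfl
          · exact hyC hzC
          · exact hiC hzC
          · exact hjC hzC
    calc G.minDegree ≤ G.degree i := G.minDegree_le_degree i
      _ = (G.neighborFinset i).card := rfl
      _ ≤ (insert j (cycleNbhd C i)).card := Finset.card_le_card hsub
      _ ≤ (cycleNbhd C i).card + 1 := Finset.card_insert_le _ _
  have hd1 : G.minDegree ≤ (cycleNbhd C x₁).card + 1 := hdeg x₁ x₂ hadj hx₁ hx₂
  have hd2 : G.minDegree ≤ (cycleNbhd C x₂).card + 1 := hdeg x₂ x₁ hadj.symm hx₂ hx₁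
  -- key non-adjacency lemmas
  have keyR : ∀ w i j : V, w ∈ C.support → (i = x₁ ∨ i = x₂) → (j = x₁ ∨ j = x₂) →
      G.Adj i w → G.Adj j (cycleSucc C w) → False := by
    intro w i j hw hi hj haw hasucc
    have hiC : i ∉ C.support := by rcases hi with rfl | rfl <;> assumption
    have hjC : j ∉ C.support := by rcases hj with rfl | rfl <;> assumption
    by_cases hij : i = j
    · subst hij
      exact key_one' hC hw hiC haw.symm hasucc
    · have haij : G.Adj i j := by
        rcases hi with rfl | rfl <;> rcases hj with rfl | rfl
        · exact absurd rfl hij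
        · exact hadj
        · exact hadj.symm
        · exact absurd rfl hij
      exact key_one hC hw hiC hjC hij haw.symm haij hasucc
  have keyM : ∀ m j : V, m ∈ C.support → (j = x₁ ∨ j = x₂) →
      G.Adj x₁ m → G.Adj x₂ m → G.Adj j (cycleSucc C (cycleSucc C m)) → False := by
    intro m j hm hj h1 h2 h3
    have hne : x₁ ≠ x₂ := G.ne_of_adj hadj
    rcases hj with rfl | rfl
    · exact key_two hC hm hx₂ hx₁ hne.symm h2.symm hadj.symm h3
    · exact key_two hC hm hx₁ hx₂ hne h1.symm hadj h3
  -- disjointness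
  have hdisj1 : Disjoint R (R.image (cycleSucc C)) := by
    rw [Finset.disjoint_left]
    intro u hu hu'
    obtain ⟨w, hwR, hwu⟩ := Finset.mem_image.mp hu'
    obtain ⟨hwC, hwadj⟩ := (hmemR w).mp hwR
    obtain ⟨huC, huadj⟩ := (hmemR u).mp hu
    rcases hwadj with hw1 | hw1 <;> rcases huadj with hu1 | hu1
    · exact keyR w x₁ x₁ hwC (Or.inl rfl) (Or.inl rfl) hw1 (hwu ▸ hu1)
    · exact keyR w x₁ x₂ hwC (Or.inl rfl) (Or.inr rfl) hw1 (hwu ▸ hu1)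
    · exact keyR w x₂ x₁ hwC (Or.inr rfl) (Or.inl rfl) hw1 (hwu ▸ hu1)
    · exact keyR w x₂ x₂ hwC (Or.inr rfl) (Or.inr rfl) hw1 (hwu ▸ hu1)
  have hdisj2 : Disjoint (R ∪ R.image (cycleSucc C)) (M.image (cycleSucc C ∘ cycleSucc C)) := by
    rw [Finset.disjoint_left]
    intro u hu hu'
    obtain ⟨m, hmM, hmu⟩ := Finset.mem_image.mp hu'
    have hmu' : cycleSucc C (cycleSucc C m) = u := hmu
    obtain ⟨hmC, hm1, hm2⟩ := (hmemM m).mp hmM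
    have hmsC : cycleSucc C m ∈ C.support := cycleSucc_mem_support hCcyc hmC
    rcases Finset.mem_union.mp hu with hu | hu
    · obtain ⟨huC, huadj⟩ := (hmemR u).mp hu
      rcases huadj with hu1 | hu1
      · exact keyM m x₁ hmC (Or.inl rfl) hm1 hm2 (hmu' ▸ hu1)
      · exact keyM m x₂ hmC (Or.inr rfl) hm1 hm2 (hmu' ▸ hu1)
    · obtain ⟨w, hwR, hwu⟩ := Finset.mem_image.mp hu
      obtain ⟨hwC, hwadj⟩ := (hmemR w).mp hwR
      have hweq : w = cycleSucc C m := by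
        apply cycleSucc_injOn hCcyc hwC hmsC
        rw [hwu, ← hmu']
      subst hweq
      rcases hwadj with hw1 | hw1
      · exact keyR m x₁ x₁ hmC (Or.inl rfl) (Or.inl rfl) hm1 hw1
      · exact keyR m x₁ x₂ hmC (Or.inl rfl) (Or.inr rfl) hm1 hw1
  -- injectivity of images
  have hRsupp : ∀ u ∈ R, u ∈ C.support := fun u hu => ((hmemR u).mp hu).1
  have hMsupp : ∀ u ∈ M, u ∈ C.support := fun u hu => ((hmemM u).mp hu).1
  have hcard1 : (R.image (cycleSucc C)).card = R.card := by
    apply Finset.card_image_of_injOn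
    intro a ha b hb hab
    exact cycleSucc_injOn hCcyc (hRsupp a ha) (hRsupp b hb) hab
  have hcard2 : (M.image (cycleSucc C ∘ cycleSucc C)).card = M.card := by
    apply Finset.card_image_of_injOn
    intro a ha b hb hab
    have haC := hMsupp a ha
    have hbC := hMsupp b hb
    have h1 : cycleSucc C a = cycleSucc C b :=
      cycleSucc_injOn hCcyc (cycleSucc_mem_support hCcyc haC)
        (cycleSucc_mem_support hCcyc hbC) hab
    exact cycleSucc_injOn hCcyc haC hbC h1
  -- card Y
  have hYcard : Y.card = R.card + R.card + M.card := by
    rw [hY, Finset.card_union_of_disjoint hdisj2, Finset.card_union_of_disjoint hdisj1,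
      hcard1, hcard2]
  have hRM : R.card + M.card = (cycleNbhd C x₁).card + (cycleNbhd C x₂).card := by
    rw [hR, hM]
    exact Finset.card_union_add_card_inter _ _
  have hRge : (cycleNbhd C x₁).card ≤ R.card := by
    rw [hR]
    exact Finset.card_le_card Finset.subset_union_left
  -- Y lies on the cycle and in V₁
  have hYsub : (↑Y : Set V) ⊆ {z | z ∈ C.support} ∩ V₁ := by
    intro u hu
    refine ⟨?_, hYV₁ hu⟩
    have hu' : u ∈ Y := hu
    rw [hY] at hu'
    simp only [Finset.mem_union, Finset.mem_image] at hu'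
    rcases hu' with (hu' | ⟨w, hw, rfl⟩) | ⟨m, hm, rfl⟩
    · exact hRsupp u hu'
    · exact cycleSucc_mem_support hCcyc (hRsupp w hw)
    · exact cycleSucc_mem_support hCcyc
        (cycleSucc_mem_support hCcyc (hMsupp m hm))
  have hfin : ({z | z ∈ C.support} ∩ V₁).Finite := Set.toFinite _
  have hYle : Y.card ≤ ({z | z ∈ C.support} ∩ V₁).ncard := by
    rw [← Set.ncard_coe_finset]
    exact Set.ncard_le_ncard hYsub hfin
  omega
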